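/- Any maximizer x* of the social welfare SW over the box ∏_n [0, ε_n] satisfies the threshold (water-filling) structure: for every n, x*_n = min(max_i x*_i, ε_n). Equivalently, there exists θ ≥ 0 such that x*_n = ε_n whenever ε_n < θ and x*_n = θ otherwise. -/

import Mathlib

open Finset

/-- Any maximizer of the social welfare over the box `∏_n [0, ε_n]` has the
threshold (water-filling) structure: `x*_n = min (max_i x*_i) (ε_n)` for every `n`;
equivalently there is a threshold `θ ≥ 0` with `x*_n = ε_n` when `ε_n < θ` and
`x*_n = θ` otherwise. -/
theorem swm_threshold_structure (N : ℕ) (hN : 0 < N) (d w ε : Fin N → ℝ)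
    (hd : ∀ n, 0 < d n) (hw : ∀ n, 0 < w n) (hε : ∀ n, 0 ≤ ε n)
    (g f : ℝ → ℝ) (hg : ConcaveOn ℝ Set.univ g) (hg' : Antitone g)
    (hf : StrictConvexOn ℝ Set.univ f) (hf' : Antitone f)
    (SW : (Fin N → ℝ) → ℝ)
    (hSW : SW = fun x => (∑ n, w n) * g ((∑ i, d i * x i) / ∑ i, d i)
      - ∑ n, d n * (f (x n) - f (ε n)))
    (x : Fin N → ℝ) (hx : x ∈ Set.univ.pi fun n => Set.Icc 0 (ε n))
    (hmax : ∀ y ∈ Set.univ.pi fun n => Set.Icc 0 (ε n), SW y ≤ SW x) :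
    (∀ n, x n = min (Finset.univ.sup' (Finset.univ_nonempty_iff.mpr ⟨⟨0, hN⟩⟩) x) (ε n))
    ∧ ∃ θ ≥ (0 : ℝ), ∀ n, (ε n < θ → x n = ε n) ∧ (θ ≤ ε n → x n = θ) := by
  subst hSW
  obtain ⟨m, -, hm⟩ := Finset.exists_mem_eq_sup'
    (Finset.univ_nonempty_iff.mpr ⟨(⟨0, hN⟩ : Fin N)⟩) x
  have hxm : ∀ i, x i ≤ x m := by
    intro i
    rw [← hm]
    exact Finset.le_sup' x (mem_univ i)
  have hbox : ∀ i, 0 ≤ x i ∧ x i ≤ ε i := fun i => hx i (Set.mem_univ i)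
  -- secant inequality from strict convexity
  have conv : ∀ a b p : ℝ, a < p → p < b →
      (b - a) * f p < (b - p) * f a + (p - a) * f b := by
    intro a b p hap hpb
    have hba : (0:ℝ) < b - a := by linarith
    have h := hf.2 (Set.mem_univ a) (Set.mem_univ b)
      (ne_of_lt (lt_trans hap hpb))
      (show (0:ℝ) < (b - p)/(b-a) from div_pos (by linarith) hba)
      (show (0:ℝ) < (p - a)/(b-a) from div_pos (by linarith) hba)
      (by field_simp; ring)
    rw [smul_eq_mul, smul_eq_mul] at h
    have hp : (b - p)/(b-a) * a + (p - a)/(b-a) * b = p := by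
      field_simp
      ring
    rw [hp] at h
    calc (b-a) * f p < (b-a) * ((b - p)/(b-a) * f a + (p - a)/(b-a) * f b) :=
          (mul_lt_mul_iff_right₀ hba).mpr h
      _ = (b-p) * f a + (p-a) * f b := by field_simp
  -- key step: every coordinate reaches min (x m) (ε n)
  have key : ∀ n, min (x m) (ε n) ≤ x n := by
    intro n
    by_contra hcon
    push_neg at hcon
    rw [lt_min_iff] at hcon
    obtain ⟨h1, h2⟩ := hcon
    have hnm : n ≠ m := fun h => absurd h1 (by rw [h]; exact lt_irrefl _)
    have hdn := hd n
    have hdm := hd m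
    set a := x n with ha
    set b := x m with hb
    set s := min (ε n - a) ((b - a)/3) with hs
    have hs0 : 0 < s := lt_min (by linarith) (by linarith)
    set t := s * min (d n) (d m) with ht
    have ht0 : 0 < t := mul_pos hs0 (lt_min hdn hdm)
    set u := t / d n with hu
    set v := t / d m with hv
    have hu0 : 0 < u := div_pos ht0 hdn
    have hv0 : 0 < v := div_pos ht0 hdm
    have hus : u ≤ s := by
      rw [div_le_iff₀ hdn]
      calc t = s * min (d n) (d m) := ht
        _ ≤ s * d n := mul_le_mul_of_nonneg_left (min_le_left _ _) hs0.le
    have hvs : v ≤ s := by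
      rw [div_le_iff₀ hdm]
      calc t = s * min (d n) (d m) := ht
        _ ≤ s * d m := mul_le_mul_of_nonneg_left (min_le_right _ _) hs0.le
    have hs3 : s ≤ (b - a)/3 := min_le_right _ _
    have hsε : s ≤ ε n - a := min_le_left _ _
    have ha'b' : a + u < b - v := by linarith
    have hdu : d n * u = t := by rw [hu]; field_simp [hdn.ne']
    have hdv : d m * v = t := by rw [hv]; field_simp [hdm.ne']
    set y : Fin N → ℝ := fun i => if i = n then a + u else if i = m then b - v else x i with hy
    have hybox : y ∈ Set.univ.pi fun i => Set.Icc 0 (ε i) := by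
      intro i _
      simp only [hy]
      split_ifs with h h'
      · rw [h]
        exact ⟨by linarith [(hbox n).1], by linarith⟩
      · rw [h']
        exact ⟨by linarith [(hbox n).1], by linarith [(hbox m).2]⟩
      · exact ⟨(hbox i).1, (hbox i).2⟩
    -- the two convexity inequalities
    have E1 : (b - a) * f (a + u) < (b - (a+u)) * f a + ((a+u) - a) * f b :=
      conv a b (a+u) (by linarith) (by linarith)
    have E2 : (b - a) * f (b - v) < (b - (b-v)) * f a + ((b-v) - a) * f b :=
      conv a b (b-v) (by linarith) (by linarith)
    have hba : (0:ℝ) < b - a := by linarith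
    have hkey : d n * f (a + u) + d m * f (b - v) < d n * f a + d m * f b := by
      have A := mul_lt_mul_of_pos_left E1 hdn
      have B := mul_lt_mul_of_pos_left E2 hdm
      have big : (b - a) * (d n * f (a + u) + d m * f (b - v))
          < (b - a) * (d n * f a + d m * f b) := by
        calc (b - a) * (d n * f (a + u) + d m * f (b - v))
            = d n * ((b - a) * f (a + u)) + d m * ((b - a) * f (b - v)) := by ring
          _ < d n * ((b - (a+u)) * f a + ((a+u) - a) * f b)
              + d m * ((b - (b-v)) * f a + ((b-v) - a) * f b) := add_lt_add A B
          _ = (b - a) * (d n * f a + d m * f b) := by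
              linear_combination (f b - f a) * hdu + (f a - f b) * hdv
      exact lt_of_mul_lt_mul_left big hba.le
    -- same average
    have sumeq : (∑ i, d i * y i) = ∑ i, d i * x i := by
      have step : ∀ i ∈ Finset.univ, d i * y i
          = d i * x i + ((if i = n then t else 0) - (if i = m then t else 0)) := by
        intro i _
        simp only [hy]
        split_ifs with h h' h''
        · exact absurd (h.symm.trans h') hnm
        · rw [h]; linear_combination hdu
        · rw [h'']; linear_combination - hdv
        · ring
      rw [Finset.sum_congr rfl step, Finset.sum_add_distrib, Finset.sum_sub_distrib]
      simp [Finset.sum_ite_eq']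
    -- penalty strictly decreases
    have peneq : ∑ i, d i * (f (y i) - f (ε i)) < ∑ i, d i * (f (x i) - f (ε i)) := by
      have step : ∀ i ∈ Finset.univ, d i * (f (y i) - f (ε i))
          = d i * (f (x i) - f (ε i))
            + ((if i = n then d n * (f (a+u) - f a) else 0)
              + (if i = m then d m * (f (b-v) - f b) else 0)) := by
        intro i _
        simp only [hy]
        split_ifs with h h' h''
        · exact absurd (h.symm.trans h') hnm
        · rw [h]; ring
        · rw [h'']; ring
        · ring
      rw [Finset.sum_congr rfl step, Finset.sum_add_distrib, Finset.sum_add_distrib]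
      simp only [Finset.sum_ite_eq', Finset.mem_univ, if_true]
      linarith
    have hcontra := hmax y hybox
    simp only [sumeq] at hcontra
    linarith
  refine ⟨?_, ?_⟩
  · intro n
    rw [hm]
    exact le_antisymm (le_min (hxm n) (hbox n).2) (key n)
  · refine ⟨x m, (hbox m).1, fun n => ⟨?_, ?_⟩⟩
    · intro hlt
      have h1 := key n
      rw [min_eq_right hlt.le] at h1
      exact le_antisymm (hbox n).2 h1
    · intro hle
      have h1 := key n
      rw [min_eq_left hle] at h1
      exact le_antisymm (hxm n) h1
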